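/- Let c, d > 0 be rationals and let D(x) = d - c·max(0, d·x) - c·max(0, -c·x). Then D(x) = 0 if and only if x = -d/c² or x = 1/c. -/

import Mathlib

theorem stmt_8 (c d : ℚ) (hc : 0 < c) (hd : 0 < d) (x : ℝ) :
    (d : ℝ) - c * max 0 (d * x) - c * max 0 (-c * x) = 0 ↔
    x = -(d : ℝ) / c ^ 2 ∨ x = 1 / c := by
  have hc' : (0:ℝ) < (c:ℝ) := by exact_mod_cast hc
  have hd' : (0:ℝ) < (d:ℝ) := by exact_mod_cast hd
  rcases le_or_gt 0 x with hx | hx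
  · have h1 : max 0 ((d:ℝ) * x) = (d:ℝ) * x := max_eq_right (by positivity)
    have h2 : max 0 (-(c:ℝ) * x) = 0 := max_eq_left (by nlinarith)
    rw [h1, h2]
    constructor
    · intro h
      right
      field_simp
      nlinarith
    · rintro (h | h)
      · exfalso
        have : x < 0 := by rw [h]; exact div_neg_of_neg_of_pos (by linarith) (by positivity)
        linarith
      · rw [h]; field_simp; ring
  · have h1 : max 0 ((d:ℝ) * x) = 0 := max_eq_left (by nlinarith)
    have h2 : max 0 (-(c:ℝ) * x) = -(c:ℝ) * x := max_eq_right (by nlinarith)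
    rw [h1, h2]
    constructor
    · intro h
      left
      field_simp
      nlinarith
    · rintro (h | h)
      · rw [h]; field_simp; ring
      · exfalso
        have : (0:ℝ) < 1 / (c:ℝ) := by positivity
        linarith [h ▸ hx]
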